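/- Let (U, V) be a centered bivariate Gaussian random vector with covariance matrix [[σ₁₁, σ₁₂], [σ₁₂, σ₂₂]], where σ₁₁ > 0 and σ₂₂ > 0 and the matrix is positive semidefinite. Then for all integers k, l ≥ 0, E[H_k(U/√σ₁₁) · H_l(V/√σ₂₂)] = (σ₁₂/√(σ₁₁σ₂₂))^k if k = l, and = 0 if k ≠ l. -/

import Mathlib

open MeasureTheory ProbabilityTheory

/-- The normalized Hermite polynomial `H_k`, i.e. the probabilists' Hermite polynomial
of degree `k` divided by `√(k!)`. -/
noncomputable def normHermite (k : ℕ) (t : ℝ) : ℝ :=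
  Polynomial.aeval t (Polynomial.hermite k) / Real.sqrt (Nat.factorial k)


section NHauxSection
open Polynomial MeasureTheory ProbabilityTheory Real Filter Topology
open scoped ENNReal NNReal
namespace NHaux

lemma hermite_derivative : ∀ n : ℕ, derivative (hermite n) = (n : Polynomial ℤ) * hermite (n - 1)
  | 0 => by simp
  | 1 => by simp [hermite_one]
  | (n + 2) => by
    have h1 : hermite (n+1) = X * hermite n - (n : Polynomial ℤ) * hermite (n-1) := by
      rw [hermite_succ, hermite_derivative n]
    rw [hermite_succ (n+1), derivative_sub, derivative_mul, derivative_X, one_mul,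
      hermite_derivative (n+1)]
    simp only [Nat.add_sub_cancel, show n + 2 - 1 = n + 1 from rfl]
    rw [derivative_mul, hermite_derivative n]
    simp only [derivative_natCast, zero_mul, zero_add]
    rw [h1]
    push_cast
    ring

/-- real Hermite polynomial -/
noncomputable def Hr (n : ℕ) : Polynomial ℝ := (hermite n).map (Int.castRingHom ℝ)

lemma aeval_eq_Hr (n : ℕ) (x : ℝ) : Polynomial.aeval x (hermite n) = (Hr n).eval x := by
  rw [Hr, eval_map, aeval_def]
  rfl

lemma Hr_zero : Hr 0 = 1 := by simp [Hr]

lemma Hr_succ (n : ℕ) : Hr (n + 1) = X * Hr n - (n : Polynomial ℝ) * Hr (n - 1) := by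
  rw [Hr, hermite_succ, hermite_derivative n, Polynomial.map_sub, Polynomial.map_mul,
    Polynomial.map_mul]
  simp [Hr]

lemma Hr_derivative (n : ℕ) : derivative (Hr n) = (n : Polynomial ℝ) * Hr (n - 1) := by
  rw [Hr, derivative_map, hermite_derivative n, Polynomial.map_mul]
  simp [Hr]

end NHaux

namespace NHaux
open scoped Nat

noncomputable def gam : Measure ℝ := gaussianReal 0 1

instance : IsProbabilityMeasure gam := by unfold gam; infer_instance

lemma pdf01 (x : ℝ) : gaussianPDFReal 0 1 x = (√(2*π))⁻¹ * rexp (-x^2/2) := by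
  simp [gaussianPDFReal]

lemma gam_eq : gam = volume.withDensity (fun x => ENNReal.ofReal (gaussianPDFReal 0 1 x)) := by
  rw [gam, gaussianReal_of_var_ne_zero 0 one_ne_zero]
  rfl

lemma integral_gam (f : ℝ → ℝ) :
    ∫ x, f x ∂gam = ∫ x, f x * gaussianPDFReal 0 1 x := by
  rw [gam_eq]
  have h1 : (fun x => ENNReal.ofReal (gaussianPDFReal 0 1 x)) =
      (fun x => ((Real.toNNReal (gaussianPDFReal 0 1 x) : ℝ≥0) : ℝ≥0∞)) := rfl
  rw [h1, integral_withDensity_eq_integral_smul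
    (measurable_gaussianPDFReal 0 1).real_toNNReal f]
  congr 1
  funext x
  rw [NNReal.smul_def, smul_eq_mul, Real.coe_toNNReal _ (gaussianPDFReal_nonneg 0 1 x), mul_comm]

lemma integrable_gam_iff {f : ℝ → ℝ} :
    Integrable f gam ↔ Integrable (fun x => f x * gaussianPDFReal 0 1 x) := by
  rw [gam_eq, integrable_withDensity_iff ((measurable_gaussianPDFReal 0 1).ennreal_ofReal) (by simp [ENNReal.ofReal_lt_top])]
  simp_rw [ENNReal.toReal_ofReal (gaussianPDFReal_nonneg 0 1 _)]

lemma integrable_pow_exp (n : ℕ) : Integrable (fun x : ℝ => x ^ n * rexp (-x^2/2)) := by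
  have h := integrable_rpow_mul_exp_neg_mul_sq (b := 1/2) (by norm_num) (s := (n : ℝ))
    (by linarith [Nat.cast_nonneg (α := ℝ) n])
  apply h.congr (Eventually.of_forall fun x => ?_)
  show x ^ (n:ℝ) * rexp (-(1/2) * x^2) = x ^ n * rexp (-x^2/2)
  rw [Real.rpow_natCast]
  ring_nf

lemma integrable_pow_gam (n : ℕ) : Integrable (fun x : ℝ => x ^ n) gam := by
  rw [integrable_gam_iff]
  have h := (integrable_pow_exp n).const_mul ((√(2*π))⁻¹)
  apply h.congr (Eventually.of_forall fun x => ?_)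
  show (√(2*π))⁻¹ * (x ^ n * rexp (-x^2/2)) = x ^ n * gaussianPDFReal 0 1 x
  rw [pdf01]; ring

lemma integrable_poly_gam (P : Polynomial ℝ) : Integrable (fun x => P.eval x) gam := by
  have h : (fun x : ℝ => P.eval x) =
      fun x => ∑ i ∈ Finset.range (P.natDegree + 1), P.coeff i * x ^ i := by
    funext x; rw [Polynomial.eval_eq_sum_range]
  rw [h]
  exact integrable_finset_sum _ fun i _ => (integrable_pow_gam i).const_mul _

noncomputable def I (n : ℕ) : ℝ := ∫ x, x ^ n ∂gam

lemma tendsto_pow_exp_cocompact (k : ℕ) :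
    Tendsto (fun x : ℝ => x ^ k * rexp (-x^2/2)) (cocompact ℝ) (𝓝 0) := by
  rw [tendsto_zero_iff_norm_tendsto_zero]
  have h := tendsto_rpow_abs_mul_exp_neg_mul_sq_cocompact (a := 1/2) one_half_pos (k : ℝ)
  apply h.congr
  intro x
  rw [Real.rpow_natCast, Real.norm_eq_abs, abs_mul, abs_pow, abs_of_pos (exp_pos _)]
  ring_nf

lemma tendsto_pow_exp_top (k : ℕ) :
    Tendsto (fun x : ℝ => x ^ k * rexp (-x^2/2)) atTop (𝓝 0) :=
  (tendsto_pow_exp_cocompact k).mono_left (by rw [cocompact_eq_atBot_atTop]; exact le_sup_right)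

lemma tendsto_pow_exp_bot (k : ℕ) :
    Tendsto (fun x : ℝ => x ^ k * rexp (-x^2/2)) atBot (𝓝 0) :=
  (tendsto_pow_exp_cocompact k).mono_left (by rw [cocompact_eq_atBot_atTop]; exact le_sup_left)

lemma key_fct (g g' : ℝ → ℝ) (hderiv : ∀ x, HasDerivAt g (g' x) x)
    (hint : Integrable g') (htop : Tendsto g atTop (𝓝 0)) (hbot : Tendsto g atBot (𝓝 0)) :
    ∫ x, g' x = 0 := by
  rw [← intervalIntegral.integral_Iic_add_Ioi (b := 0) hint.integrableOn hint.integrableOn,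
    integral_Ioi_of_hasDerivAt_of_tendsto' (fun x _ => hderiv x) hint.integrableOn htop,
    integral_Iic_of_hasDerivAt_of_tendsto' (fun x _ => hderiv x) hint.integrableOn hbot]
  ring


lemma dgauss (n : ℕ) (x : ℝ) :
    HasDerivAt (fun x : ℝ => -(x^(n+1) * rexp (-x^2/2)))
      ((x^(n+2) - (n+1) * x^n) * rexp (-x^2/2)) x := by
  have h1 : HasDerivAt (fun x : ℝ => -x^2/2) (-(2 * x^1)/2) x :=
    (hasDerivAt_pow 2 x).neg.div_const 2
  have h2 : HasDerivAt (fun x : ℝ => -(x^(n+1) * rexp (-x^2/2)))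
      (-(((n+1:ℕ):ℝ) * x^n * rexp (-x^2/2) + x^(n+1) * (rexp (-x^2/2) * (-(2*x^1)/2)))) x :=
    ((hasDerivAt_pow (n+1) x).mul h1.exp).neg
  convert h2 using 1
  push_cast
  ring

lemma dgauss0 (x : ℝ) :
    HasDerivAt (fun x : ℝ => -(rexp (-x^2/2))) (x * rexp (-x^2/2)) x := by
  have h1 : HasDerivAt (fun x : ℝ => -x^2/2) (-(2 * x^1)/2) x :=
    (hasDerivAt_pow 2 x).neg.div_const 2
  have h2 : HasDerivAt (fun x : ℝ => -(rexp (-x^2/2))) (-(rexp (-x^2/2) * (-(2*x^1)/2))) x :=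
    h1.exp.neg
  convert h2 using 1
  ring

lemma key (n : ℕ) : ∫ x : ℝ, (x^(n+2) - (n+1) * x^n) * rexp (-x^2/2) = 0 := by
  apply key_fct _ _ (dgauss n)
  · apply ((integrable_pow_exp (n+2)).sub ((integrable_pow_exp n).const_mul (n+1))).congr
    apply Eventually.of_forall fun x => ?_
    show x^(n+2) * rexp (-x^2/2) - (n+1) * (x^n * rexp (-x^2/2)) = _
    ring
  · simpa using (tendsto_pow_exp_top (n+1)).neg
  · simpa using (tendsto_pow_exp_bot (n+1)).neg

lemma key1 : ∫ x : ℝ, x * rexp (-x^2/2) = 0 := by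
  apply key_fct _ _ dgauss0
  · apply (integrable_pow_exp 1).congr
    apply Eventually.of_forall fun x => ?_
    simp [pow_one]
  · simpa using (tendsto_pow_exp_top 0).neg
  · simpa using (tendsto_pow_exp_bot 0).neg

lemma integral_gam_poly_exp (f : ℝ → ℝ) (h : ∫ x : ℝ, f x * rexp (-x^2/2) = 0) :
    ∫ x, f x ∂gam = 0 := by
  rw [integral_gam]
  have h2 : (fun x => f x * gaussianPDFReal 0 1 x) =
      fun x => (√(2*π))⁻¹ * (f x * rexp (-x^2/2)) := by
    funext x; rw [pdf01]; ring
  rw [h2, integral_const_mul, h, mul_zero]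

lemma I_zero : I 0 = 1 := by
  simp [I]

lemma I_one : I 1 = 0 := by
  have := integral_gam_poly_exp (fun x => x^1) (by simpa [pow_one] using key1)
  simpa [I] using this

lemma I_rec (n : ℕ) : I (n+2) = (n+1) * I n := by
  have e1 : ∫ x : ℝ, (x^(n+2) - (n+1)*x^n) ∂gam = 0 :=
    integral_gam_poly_exp _ (key n)
  have e2 : ∫ x : ℝ, (x^(n+2) - (n+1)*x^n) ∂gam = I (n+2) - (n+1) * I n := by
    rw [integral_sub (integrable_pow_gam (n+2)) ((integrable_pow_gam n).const_mul _),
      integral_const_mul]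
    rfl
  rw [e2] at e1
  linarith

lemma I_succ (n : ℕ) : I (n+1) = n * I (n-1) := by
  cases n with
  | zero => simpa using I_one
  | succ m => simpa using I_rec m

lemma I_odd (q : ℕ) : I (2*q+1) = 0 := by
  induction q with
  | zero => simpa using I_one
  | succ m ih =>
    have h : 2*(m+1)+1 = (2*m+1)+2 := by ring
    rw [h, I_rec, ih, mul_zero]

lemma I_even (q : ℕ) : I (2*q) = ((2*q - 1)‼ : ℝ) := by
  induction q with
  | zero => simpa using I_zero
  | succ m ih =>
    have h : 2*(m+1) = 2*m+2 := by ring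
    rw [h, I_rec, ih]
    have h3 : 2*m+2-1 = 2*m+1 := by omega
    rw [h3, Nat.doubleFactorial_add_one]
    push_cast
    ring

lemma stein (P : Polynomial ℝ) : ∫ x, x * P.eval x ∂gam = ∫ x, (derivative P).eval x ∂gam := by
  induction P using Polynomial.induction_on' with
  | add p q hp hq =>
    have ip : Integrable (fun x => x * p.eval x) gam := by
      exact (integrable_poly_gam (X*p)).congr (Eventually.of_forall fun x => by simp)
    have iq : Integrable (fun x => x * q.eval x) gam := by
      exact (integrable_poly_gam (X*q)).congr (Eventually.of_forall fun x => by simp)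
    simp_rw [eval_add, mul_add]
    rw [integral_add ip iq, derivative_add]
    simp_rw [eval_add]
    rw [integral_add (integrable_poly_gam _) (integrable_poly_gam _), hp, hq]
  | monomial n a =>
    have h1 : (fun x : ℝ => x * (monomial n a).eval x) = fun x : ℝ => a * x^(n+1) := by
      funext x; simp [eval_monomial]; ring
    have h2 : (fun x : ℝ => (derivative (monomial n a)).eval x) =
        fun x : ℝ => (a * n) * x^(n-1) := by
      funext x; simp [derivative_monomial, eval_monomial]
    rw [h1, h2, integral_const_mul, integral_const_mul]
    show a * I (n+1) = a * n * I (n-1)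
    rw [I_succ]
    ring


lemma integrable_P2 (p q : Polynomial ℝ) :
    Integrable (fun x => p.eval x * q.eval x) gam :=
  (integrable_poly_gam (p*q)).congr (Eventually.of_forall fun x => by simp)

noncomputable def E (k l : ℕ) : ℝ := ∫ x, (Hr k).eval x * (Hr l).eval x ∂gam

lemma int_Hr (l : ℕ) : ∫ x, (Hr l).eval x ∂gam = if l = 0 then 1 else 0 := by
  cases l with
  | zero => simp [Hr_zero]
  | succ m =>
    have h1 : (fun x => (Hr (m+1)).eval x) =
        fun x => x * (Hr m).eval x - (m:ℝ) * (Hr (m-1)).eval x := by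
      funext x; rw [Hr_succ]; simp
    have h2 : Integrable (fun x => x * (Hr m).eval x) gam :=
      (integrable_poly_gam (X * Hr m)).congr (Eventually.of_forall fun x => by simp)
    rw [h1, integral_sub h2 ((integrable_poly_gam (Hr (m-1))).const_mul _),
      integral_const_mul, stein (Hr m), Hr_derivative]
    simp only [eval_mul, eval_natCast]
    rw [integral_const_mul]
    simp

lemma E_succ (k l : ℕ) : E (k+1) l = l * E k (l-1) := by
  have h1 : (fun x => (Hr (k+1)).eval x * (Hr l).eval x) =
      fun x => x * ((Hr k) * (Hr l)).eval x - (k:ℝ) * ((Hr (k-1)).eval x * (Hr l).eval x) := by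
    funext x; rw [Hr_succ]; simp; ring
  have h2 : Integrable (fun x => x * ((Hr k) * (Hr l)).eval x) gam :=
    (integrable_poly_gam (X * (Hr k * Hr l))).congr (Eventually.of_forall fun x => by simp)
  have h3 : ∫ x, (derivative (Hr k * Hr l)).eval x ∂gam
      = k * E (k-1) l + l * E k (l-1) := by
    have h4 : (fun x => (derivative (Hr k * Hr l)).eval x) =
        fun x => (k:ℝ) * ((Hr (k-1)).eval x * (Hr l).eval x)
          + (l:ℝ) * ((Hr k).eval x * (Hr (l-1)).eval x) := by
      funext x
      rw [derivative_mul, Hr_derivative, Hr_derivative]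
      simp; ring
    rw [h4, integral_add (((integrable_P2 _ _).const_mul _)) (((integrable_P2 _ _).const_mul _)),
      integral_const_mul, integral_const_mul]
    rfl
  have h5 : E (k+1) l
      = (k * E (k-1) l + l * E k (l-1)) - k * E (k-1) l := by
    rw [← h3, ← stein (Hr k * Hr l), E]
    rw [h1, integral_sub h2 ((integrable_P2 _ _).const_mul _), integral_const_mul]
    rfl
  rw [h5]; ring

lemma E_eq : ∀ k l, E k l = if k = l then (k ! : ℝ) else 0 := by
  intro k
  induction k with
  | zero =>
    intro l
    have : E 0 l = ∫ x, (Hr l).eval x ∂gam := by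
      unfold E; simp [Hr_zero]
    rw [this, int_Hr]
    simp [eq_comm]
  | succ k ih =>
    intro l
    cases l with
    | zero => rw [E_succ]; simp
    | succ m =>
      rw [E_succ, ih]
      simp only [Nat.add_sub_cancel]
      by_cases h : k = m
      · subst h
        simp [Nat.factorial_succ]
        try ring
      · simp [h, fun hh => h (Nat.succ_injective hh)]

lemma comp_eval (P : Polynomial ℝ) (c d y : ℝ) :
    (P.comp (C c + C d * X)).eval y = P.eval (c + d*y) := by
  simp [eval_comp]

lemma integrable_comp (P : Polynomial ℝ) (c d : ℝ) :
    Integrable (fun y => P.eval (c + d*y)) gam :=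
  (integrable_poly_gam (P.comp (C c + C d * X))).congr
    (Eventually.of_forall fun y => comp_eval P c d y)

lemma stein_comp (P : Polynomial ℝ) (c d : ℝ) :
    ∫ y, y * P.eval (c + d*y) ∂gam = d * ∫ y, (derivative P).eval (c + d*y) ∂gam := by
  have h1 : ∫ y, y * (P.comp (C c + C d * X)).eval y ∂gam
      = ∫ y, (derivative (P.comp (C c + C d * X))).eval y ∂gam := stein _
  simp_rw [comp_eval] at h1
  rw [h1]
  have h2 : (fun y => (derivative (P.comp (C c + C d * X))).eval y)
      = fun y => d * (derivative P).eval (c + d*y) := by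
    funext y
    rw [derivative_comp]
    simp [comp_eval, eval_comp]
    try ring
  rw [h2, integral_const_mul]

lemma translate (ρ s : ℝ) (hs : ρ^2 + s^2 = 1) :
    ∀ (l : ℕ) (x : ℝ), ∫ y, (Hr l).eval (ρ*x + s*y) ∂gam = ρ^l * (Hr l).eval x
  | 0, x => by simp [Hr_zero]
  | 1, x => by
    have h1 : Hr 1 = X := by
      rw [Hr_succ, Hr_zero]; simp
    simp only [h1, eval_X]
    rw [integral_add (integrable_const _) ?_, integral_const]
    · have h2 : (fun y : ℝ => s * y) = fun y : ℝ => s * y^1 := by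
        funext y; rw [pow_one]
      rw [h2, integral_const_mul]
      have h3 : (∫ y : ℝ, y ^ 1 ∂gam) = I 1 := rfl
      rw [h3, I_one]
      simp
    · exact ((integrable_pow_gam 1).const_mul s).congr
        (Eventually.of_forall fun y => by simp)
  | (l+2), x => by
    have key1 := translate ρ s hs (l+1) x
    have key0 := translate ρ s hs l x
    have hsucc : ∀ t : ℝ, (Hr (l+2)).eval t
        = t * (Hr (l+1)).eval t - ((l:ℝ)+1) * (Hr l).eval t := by
      intro t
      rw [Hr_succ (l+1)]
      simp only [Nat.add_sub_cancel, eval_sub, eval_mul, eval_X, eval_natCast]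
      push_cast
      ring
    have h1 : (fun y => (Hr (l+2)).eval (ρ*x + s*y)) =
        fun y => ((ρ*x) * (Hr (l+1)).eval (ρ*x + s*y) + s * (y * (Hr (l+1)).eval (ρ*x + s*y)))
          - ((l:ℝ)+1) * (Hr l).eval (ρ*x + s*y) := by
      funext y
      rw [hsucc]
      ring
    have hy : Integrable (fun y => y * (Hr (l+1)).eval (ρ*x + s*y)) gam := by
      have h := integrable_poly_gam (X * (Hr (l+1)).comp (C (ρ*x) + C s * X))
      apply h.congr (Eventually.of_forall fun y => ?_)
      simp [eval_comp]
    have h2 : Integrable (fun y => (ρ*x) * (Hr (l+1)).eval (ρ*x + s*y)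
        + s * (y * (Hr (l+1)).eval (ρ*x + s*y))) gam :=
      ((integrable_comp _ _ _).const_mul _).add (hy.const_mul s)
    have hyint : ∫ y, y * (Hr (l+1)).eval (ρ*x + s*y) ∂gam
        = s * (((l:ℝ)+1) * (ρ^l * (Hr l).eval x)) := by
      rw [stein_comp, Hr_derivative]
      congr 1
      have h4 : (fun y => ((((l+1:ℕ) : Polynomial ℝ)) * Hr (l+1-1)).eval (ρ*x+s*y))
          = fun y => ((l:ℝ)+1) * (Hr l).eval (ρ*x+s*y) := by
        funext y
        simp only [Nat.add_sub_cancel, eval_mul, eval_natCast]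
        push_cast
        ring
      rw [h4, integral_const_mul, key0]
    rw [h1, integral_sub h2 ((integrable_comp _ _ _).const_mul _),
      integral_add ((integrable_comp _ _ _).const_mul _) (hy.const_mul s),
      integral_const_mul, integral_const_mul, integral_const_mul, hyint, key1, key0, hsucc x]
    linear_combination (((l:ℝ)+1) * ρ^l * (Hr l).eval x) * hs


lemma I_odd' {n : ℕ} (h : Odd n) : I n = 0 := by
  obtain ⟨q, rfl⟩ := h
  exact I_odd q

lemma nat_A : ∀ m : ℕ, 2^m * m ! * (2*m-1)‼ = (2*m)! := by
  intro m
  cases m with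
  | zero => rfl
  | succ n =>
    have h1 : (2*(n+1)) = (2*n+1) + 1 := by ring
    rw [h1, Nat.factorial_eq_mul_doubleFactorial (2*n+1)]
    have h2 : (2*n+1+1) = 2*(n+1) := by ring
    rw [h2, Nat.doubleFactorial_two_mul]
    have h3 : 2*(n+1) - 1 = 2*n+1 := by omega
    rw [h3]
    try ring

lemma nat_id (q p : ℕ) (h : p ≤ q) :
    (2*q).choose (2*p) * (2*p-1)‼ * (2*(q-p)-1)‼ = (2*q-1)‼ * q.choose p := by
  have hmul : ((2*q).choose (2*p) * (2*p-1)‼ * (2*(q-p)-1)‼) * (2^q * (p ! * (q-p)!))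
      = ((2*q-1)‼ * q.choose p) * (2^q * (p ! * (q-p)!)) := by
    have h2q : 2^q = 2^p * 2^(q-p) := by rw [← pow_add]; congr 1; omega
    have e1 : ((2*q).choose (2*p) * (2*p-1)‼ * (2*(q-p)-1)‼) * (2^q * (p ! * (q-p)!))
        = (2*q).choose (2*p) * (2^p * p ! * (2*p-1)‼) * (2^(q-p) * (q-p)! * (2*(q-p)-1)‼) := by
      rw [h2q]; ring
    rw [e1, nat_A p, nat_A (q-p)]
    have h2 : 2*(q-p) = 2*q - 2*p := by omega
    rw [h2, Nat.choose_mul_factorial_mul_factorial (by omega : 2*p ≤ 2*q)]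
    have e2 : ((2*q-1)‼ * q.choose p) * (2^q * (p ! * (q-p)!))
        = (2*q-1)‼ * (q.choose p * p ! * (q-p)!) * 2^q := by ring
    rw [e2, Nat.choose_mul_factorial_mul_factorial h]
    have e3 : (2*q-1)‼ * q ! * 2^q = 2^q * q ! * (2*q-1)‼ := by ring
    rw [e3, nat_A q]
  have hpos : 0 < 2^q * (p ! * (q-p)!) :=
    Nat.mul_pos (Nat.pow_pos (by norm_num)) (Nat.mul_pos p.factorial_pos (q-p).factorial_pos)
  exact Nat.eq_of_mul_eq_mul_right hpos hmul

lemma sum_even_terms (f : ℕ → ℝ) (hf : ∀ i, Odd i → f i = 0) :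
    ∀ q : ℕ, ∑ i ∈ Finset.range (2*q+1), f i = ∑ p ∈ Finset.range (q+1), f (2*p)
  | 0 => by simp
  | (q+1) => by
    have h1 : 2*(q+1)+1 = (2*q+1) + 1 + 1 := by ring
    rw [h1, Finset.sum_range_succ, Finset.sum_range_succ (n := 2*q+1),
      sum_even_terms f hf q, hf (2*q+1) ⟨q, by ring⟩, Finset.sum_range_succ (n := q+1)]
    have h2 : 2*q+1+1 = 2*(q+1) := by ring
    rw [h2]
    ring

lemma moment_v (v : ℝ≥0) (N : ℕ) :
    ∫ t, t^N ∂(gaussianReal 0 v) = (√(v:ℝ))^N * I N := by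
  have h := gaussianReal_map_const_mul (μ := 0) (v := 1) (√(v:ℝ))
  rw [mul_zero] at h
  simp only [mul_one] at h
  have hv : (NNReal.mk ((√(v:ℝ))^2) (sq_nonneg (√(v:ℝ)))) = v := by
    apply NNReal.coe_injective
    exact Real.sq_sqrt v.coe_nonneg
  rw [hv] at h
  rw [show (gaussianReal 0 1 : Measure ℝ) = gam from rfl] at h
  rw [← h, integral_map (by fun_prop) (by fun_prop)]
  simp_rw [mul_pow]
  rw [integral_const_mul]
  rfl

lemma mom (a b : ℝ) (N : ℕ) :
    ∫ p : ℝ×ℝ, (a*p.1 + b*p.2)^N ∂(gam.prod gam)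
      = ∫ t, t^N ∂(gaussianReal 0 (Real.toNNReal (a^2+b^2))) := by
  have hab : ((Real.toNNReal (a^2+b^2) : ℝ≥0) : ℝ) = a^2 + b^2 :=
    Real.coe_toNNReal _ (by positivity)
  rw [moment_v, hab]
  -- expand LHS
  have hfun : (fun p : ℝ×ℝ => (a*p.1 + b*p.2)^N)
      = fun p => ∑ i ∈ Finset.range (N+1),
          ((N.choose i : ℝ) * a^i * b^(N-i)) * (p.1^i * p.2^(N-i)) := by
    funext p
    rw [add_pow]
    apply Finset.sum_congr rfl
    intro i hi
    rw [mul_pow, mul_pow]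
    ring
  rw [hfun, integral_finset_sum]
  swap
  · intro i _
    exact ((integrable_pow_gam i).mul_prod (integrable_pow_gam (N-i))).const_mul _
  have hterm : ∀ i ∈ Finset.range (N+1),
      ∫ p : ℝ×ℝ, ((N.choose i : ℝ) * a^i * b^(N-i)) * (p.1^i * p.2^(N-i)) ∂(gam.prod gam)
        = (N.choose i : ℝ) * a^i * b^(N-i) * (I i * I (N-i)) := by
    intro i _
    rw [integral_const_mul,
      show (∫ p : ℝ×ℝ, p.1^i * p.2^(N-i) ∂(gam.prod gam)) = I i * I (N-i) from
        integral_prod_mul (fun x : ℝ => x^i) (fun y : ℝ => y^(N-i))]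
  rw [Finset.sum_congr rfl hterm]
  -- now the combinatorial identity
  rcases Nat.even_or_odd N with hN | hN
  · obtain ⟨q, rfl⟩ := hN
    rw [show q + q = 2*q from by ring]
    rw [sum_even_terms (fun i => (((2*q).choose i : ℝ)) * a^i * b^(2*q-i) * (I i * I (2*q-i)))
      (fun i hi => by beta_reduce; rw [I_odd' hi, zero_mul, mul_zero]) q]
    have hstep : ∀ p ∈ Finset.range (q+1),
        (((2*q).choose (2*p) : ℝ)) * a^(2*p) * b^(2*q-2*p) * (I (2*p) * I (2*q-2*p))
          = ((2*q-1)‼ : ℝ) * ((q.choose p : ℝ) * (a^2)^p * (b^2)^(q-p)) := by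
      intro p hp
      have hpq : p ≤ q := by simp only [Finset.mem_range] at hp; omega
      have h1 : 2*q - 2*p = 2*(q-p) := by omega
      rw [h1, I_even, I_even]
      have h3 : (((2*q).choose (2*p) : ℝ)) * ((2*p-1)‼ : ℝ) * ((2*(q-p)-1)‼ : ℝ)
          = ((2*q-1)‼ : ℝ) * (q.choose p : ℝ) := by
        exact_mod_cast congrArg (Nat.cast : ℕ → ℝ) (nat_id q p hpq)
      calc (((2*q).choose (2*p) : ℝ)) * a^(2*p) * b^(2*(q-p)) * (((2*p-1)‼:ℝ) * ((2*(q-p)-1)‼:ℝ))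
          = ((((2*q).choose (2*p) : ℝ)) * ((2*p-1)‼:ℝ) * ((2*(q-p)-1)‼:ℝ))
              * (a^(2*p) * b^(2*(q-p))) := by ring
        _ = (((2*q-1)‼ : ℝ) * (q.choose p : ℝ)) * (a^(2*p) * b^(2*(q-p))) := by rw [h3]
        _ = ((2*q-1)‼ : ℝ) * ((q.choose p : ℝ) * (a^2)^p * (b^2)^(q-p)) := by
            rw [pow_mul a, pow_mul b]; ring
    rw [Finset.sum_congr rfl hstep, ← Finset.mul_sum]
    have hbin : ∑ p ∈ Finset.range (q+1), ((q.choose p : ℝ) * (a^2)^p * (b^2)^(q-p))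
        = (a^2+b^2)^q := by
      rw [add_pow]
      apply Finset.sum_congr rfl
      intro p _
      ring
    rw [hbin, pow_mul, Real.sq_sqrt (by positivity), I_even]
    ring
  · obtain ⟨q, rfl⟩ := hN
    rw [I_odd' ⟨q, rfl⟩, mul_zero]
    apply Finset.sum_eq_zero
    intro i hi
    rcases Nat.even_or_odd i with h2 | h2
    · have : Odd (2*q+1 - i) := by
        rcases h2 with ⟨m, rfl⟩
        simp only [Finset.mem_range] at hi
        exact ⟨q - m, by omega⟩
      rw [I_odd' this, mul_zero, mul_zero]
    · rw [I_odd' h2, zero_mul, mul_zero]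


lemma integrable_prod_comp (P Q : Polynomial ℝ) (c d : ℝ) :
    Integrable (fun p : ℝ×ℝ => P.eval p.1 * Q.eval (c*p.1 + d*p.2)) (gam.prod gam) := by
  induction Q using Polynomial.induction_on' with
  | add q r hq hr =>
    apply (hq.add hr).congr (Eventually.of_forall fun p => ?_)
    simp only [Pi.add_apply, eval_add]
    ring
  | monomial n a =>
    have hfun : (fun p : ℝ×ℝ => P.eval p.1 * (monomial n a).eval (c*p.1 + d*p.2))
        = fun p => ∑ m ∈ Finset.range (n+1),
            (a * c^m * d^(n-m) * (n.choose m)) * ((P.eval p.1 * p.1^m) * p.2^(n-m)) := by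
      funext p
      rw [eval_monomial, add_pow, Finset.mul_sum, Finset.mul_sum]
      apply Finset.sum_congr rfl
      intro m _
      rw [mul_pow, mul_pow]
      ring
    rw [hfun]
    apply integrable_finset_sum
    intro m _
    apply Integrable.const_mul
    have hP : Integrable (fun t : ℝ => eval t P * t^m) gam :=
      (integrable_poly_gam (P * X^m)).congr (Eventually.of_forall fun x => by simp)
    exact hP.mul_prod (integrable_pow_gam (n-m))

lemma concrete (ρ s : ℝ) (hs : ρ^2 + s^2 = 1) (k l : ℕ) :
    ∫ p : ℝ×ℝ, (Hr k).eval p.1 * (Hr l).eval (ρ*p.1 + s*p.2) ∂(gam.prod gam)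
      = if k = l then ρ^k * (k ! : ℝ) else 0 := by
  rw [MeasureTheory.integral_prod _ (integrable_prod_comp (Hr k) (Hr l) ρ s)]
  have h3 : (∫ x, ∫ y, (fun p : ℝ×ℝ => (Hr k).eval p.1 * (Hr l).eval (ρ*p.1 + s*p.2)) (x, y)
      ∂gam ∂gam) = ∫ x, ∫ y, (Hr k).eval x * (Hr l).eval (ρ*x + s*y) ∂gam ∂gam := rfl
  rw [h3]
  have h1 : (fun x => ∫ y, (Hr k).eval x * (Hr l).eval (ρ*x + s*y) ∂gam)
      = fun x => ρ^l * ((Hr k).eval x * (Hr l).eval x) := by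
    funext x
    rw [integral_const_mul, translate ρ s hs l x]
    ring
  rw [h1, integral_const_mul,
    show (∫ x, (Hr k).eval x * (Hr l).eval x ∂gam) = E k l from rfl, E_eq]
  by_cases h : k = l
  · subst h
    simp
    try ring
  · simp [h]

lemma expand_moment {Ω : Type*} [MeasurableSpace Ω] (μ : Measure Ω)
    (X Y : Ω → ℝ) (hmix : ∀ m n : ℕ, Integrable (fun ω => X ω ^ m * Y ω ^ n) μ)
    (N : ℕ) (a b : ℝ) :
    ∫ ω, (a * X ω + b * Y ω)^N ∂μ
      = ∑ i ∈ Finset.range (N+1),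
          (N.choose i : ℝ) * a^i * b^(N-i) * ∫ ω, X ω^i * Y ω^(N-i) ∂μ := by
  have hfun : (fun ω => (a * X ω + b * Y ω)^N)
      = fun ω => ∑ i ∈ Finset.range (N+1),
          ((N.choose i : ℝ) * a^i * b^(N-i)) * (X ω^i * Y ω^(N-i)) := by
    funext ω
    rw [add_pow]
    apply Finset.sum_congr rfl
    intro i _
    rw [mul_pow, mul_pow]
    ring
  rw [hfun, integral_finset_sum _ (fun i _ => (hmix i (N-i)).const_mul _)]
  apply Finset.sum_congr rfl
  intro i _
  rw [integral_const_mul]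

lemma extract (N : ℕ) (c d : ℕ → ℝ)
    (h : ∀ a b : ℝ, ∑ i ∈ Finset.range (N+1), (N.choose i : ℝ) * a^i * b^(N-i) * c i
       = ∑ i ∈ Finset.range (N+1), (N.choose i : ℝ) * a^i * b^(N-i) * d i)
    (i₀ : ℕ) (hi : i₀ ≤ N) : c i₀ = d i₀ := by
  have key : ∀ (e : ℕ → ℝ) (a b : ℝ),
      ∑ i ∈ Finset.range (N+1), (N.choose i : ℝ) * a^i * b^(N-i) * e i
        = Polynomial.eval a (∑ i ∈ Finset.range (N+1),
            Polynomial.C ((N.choose i : ℝ) * b^(N-i) * e i) * Polynomial.X ^ i) := by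
    intro e a b
    rw [Polynomial.eval_finset_sum]
    apply Finset.sum_congr rfl
    intro i _
    simp only [eval_mul, eval_C, eval_pow, eval_X]
    ring
  have hpoly : (∑ i ∈ Finset.range (N+1),
        Polynomial.C ((N.choose i : ℝ) * (1:ℝ)^(N-i) * c i) * Polynomial.X ^ i)
      = ∑ i ∈ Finset.range (N+1),
        Polynomial.C ((N.choose i : ℝ) * (1:ℝ)^(N-i) * d i) * Polynomial.X ^ i := by
    apply Polynomial.funext
    intro a
    rw [← key c a 1, ← key d a 1, h a 1]
  have hcoeff := congrArg (fun P => Polynomial.coeff P i₀) hpoly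
  simp only [Polynomial.finset_sum_coeff, Polynomial.coeff_C_mul, Polynomial.coeff_X_pow,
    mul_ite, mul_one, mul_zero, Finset.sum_ite_eq, Finset.mem_range] at hcoeff
  rw [if_pos (by omega : i₀ < N + 1), if_pos (by omega : i₀ < N + 1)] at hcoeff
  simp only [one_pow, mul_one] at hcoeff
  have hch : ((N.choose i₀ : ℕ) : ℝ) ≠ 0 := by
    exact_mod_cast (Nat.choose_pos hi).ne'
  exact mul_left_cancel₀ hch hcoeff

lemma expand_hermite {Ω : Type*} [MeasurableSpace Ω] (μ : Measure Ω) (A B : Ω → ℝ)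
    (hmix : ∀ m n : ℕ, Integrable (fun ω => A ω^m * B ω^n) μ) (k l : ℕ) :
    ∫ ω, (Hr k).eval (A ω) * (Hr l).eval (B ω) ∂μ
      = ∑ i ∈ Finset.range (k+1), ∑ j ∈ Finset.range (l+1),
          (Hr k).coeff i * (Hr l).coeff j * ∫ ω, A ω^i * B ω^j ∂μ := by
  have hdegk : (Hr k).natDegree < k + 1 :=
    lt_of_le_of_lt (natDegree_map_le.trans_eq natDegree_hermite) (lt_add_one k)
  have hdegl : (Hr l).natDegree < l + 1 :=
    lt_of_le_of_lt (natDegree_map_le.trans_eq natDegree_hermite) (lt_add_one l)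
  have hfun : (fun ω => (Hr k).eval (A ω) * (Hr l).eval (B ω))
      = fun ω => ∑ i ∈ Finset.range (k+1), ∑ j ∈ Finset.range (l+1),
          ((Hr k).coeff i * (Hr l).coeff j) * (A ω^i * B ω^j) := by
    funext ω
    rw [eval_eq_sum_range' hdegk (A ω), eval_eq_sum_range' hdegl (B ω), Finset.sum_mul_sum]
    apply Finset.sum_congr rfl
    intro i _
    apply Finset.sum_congr rfl
    intro j _
    ring
  rw [hfun, integral_finset_sum _ (fun i _ =>
    integrable_finset_sum _ (fun j _ => (hmix i j).const_mul _))]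
  apply Finset.sum_congr rfl
  intro i _
  rw [integral_finset_sum _ (fun j _ => (hmix i j).const_mul _)]
  apply Finset.sum_congr rfl
  intro j _
  rw [integral_const_mul]

end NHaux

open NHaux MeasureTheory ProbabilityTheory Real Filter
open scoped Nat


end NHauxSection

open NHaux MeasureTheory ProbabilityTheory Real Filter
open scoped Nat

/-- Let `(U, V)` be a centered bivariate Gaussian vector with covariance matrix
`[[σ₁₁, σ₁₂], [σ₁₂, σ₂₂]]` (`σ₁₁, σ₂₂ > 0`, positive semidefinite); joint Gaussianity is
expressed by the requirement that every linear combination `aU + bV` is a centered Gaussian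
with the appropriate variance. Then
`E[H_k(U/√σ₁₁) H_l(V/√σ₂₂)] = δ_{kl} (σ₁₂/√(σ₁₁σ₂₂))^k`. -/
theorem expectation_normHermite_bivariate_gaussian
    {Ω : Type*} [MeasureSpace Ω] [IsProbabilityMeasure (ℙ : Measure Ω)]
    (U V : Ω → ℝ) (hU : Measurable U) (hV : Measurable V)
    (σ11 σ12 σ22 : ℝ) (h11 : 0 < σ11) (h22 : 0 < σ22) (hpsd : σ12 ^ 2 ≤ σ11 * σ22)
    (hGauss : ∀ a b : ℝ,
      Measure.map (fun ω => a * U ω + b * V ω) ℙ =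
        gaussianReal 0 (Real.toNNReal (a ^ 2 * σ11 + 2 * a * b * σ12 + b ^ 2 * σ22)))
    (k l : ℕ) :
    ∫ ω, normHermite k (U ω / Real.sqrt σ11) * normHermite l (V ω / Real.sqrt σ22) ∂ℙ =
      if k = l then (σ12 / Real.sqrt (σ11 * σ22)) ^ k else 0 := by
  classical
  obtain ⟨u, hu, rfl⟩ : ∃ u : ℝ, 0 < u ∧ u^2 = σ11 :=
    ⟨√σ11, Real.sqrt_pos.mpr h11, Real.sq_sqrt h11.le⟩
  obtain ⟨v, hv, rfl⟩ : ∃ v : ℝ, 0 < v ∧ v^2 = σ22 :=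
    ⟨√σ22, Real.sqrt_pos.mpr h22, Real.sq_sqrt h22.le⟩
  have hu' : √(u^2) = u := Real.sqrt_sq hu.le
  have hv' : √(v^2) = v := Real.sqrt_sq hv.le
  have huv : √(u^2*v^2) = u*v := by
    rw [show u^2*v^2 = (u*v)^2 from by ring, Real.sqrt_sq (by positivity)]
  rw [huv]
  set ρ : ℝ := σ12 / (u*v) with hρdef
  set X : Ω → ℝ := fun ω => U ω / u with hXdef
  set Y : Ω → ℝ := fun ω => V ω / v with hYdef
  have hXm : Measurable X := hU.div_const _
  have hYm : Measurable Y := hV.div_const _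
  have hρ2 : ρ^2 ≤ 1 := by
    rw [hρdef, div_pow, mul_pow]
    exact div_le_one_of_le₀ hpsd (by positivity)
  set s : ℝ := √(1-ρ^2) with hsdef
  have hs : ρ^2 + s^2 = 1 := by
    rw [hsdef, Real.sq_sqrt (by linarith)]; ring
  have hGauss' : ∀ a b : ℝ, Measure.map (fun ω => a * X ω + b * Y ω) ℙ
      = gaussianReal 0 (Real.toNNReal (a^2 + 2*a*b*ρ + b^2)) := by
    intro a b
    have hfun2 : (fun ω => (a/u) * U ω + (b/v) * V ω) = fun ω => a * X ω + b * Y ω := by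
      funext ω
      rw [hXdef, hYdef]
      field_simp
    rw [← hfun2, hGauss (a/u) (b/v)]
    have harg : (a/u)^2*(u^2) + 2*(a/u)*(b/v)*σ12 + (b/v)^2*(v^2)
        = a^2 + 2*a*b*ρ + b^2 := by
      rw [hρdef]
      field_simp
      try ring
    rw [harg]
  have hXg : Measure.map X ℙ = gam := by
    have h := hGauss' 1 0
    rw [show (fun ω => 1 * X ω + 0 * Y ω) = X from funext fun ω => by ring] at h
    rw [h]
    norm_num [gam]
  have hYg : Measure.map Y ℙ = gam := by
    have h := hGauss' 0 1
    rw [show (fun ω => 0 * X ω + 1 * Y ω) = Y from funext fun ω => by ring] at h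
    rw [h]
    norm_num [gam]
  have hXn : ∀ n : ℕ, Integrable (fun ω => X ω ^ n) ℙ := by
    intro n
    have h0 : Integrable (fun t : ℝ => t ^ n) (Measure.map X ℙ) := by
      rw [hXg]; exact integrable_pow_gam n
    exact (integrable_map_measure (continuous_pow n).aestronglyMeasurable
      hXm.aemeasurable).mp h0
  have hYn : ∀ n : ℕ, Integrable (fun ω => Y ω ^ n) ℙ := by
    intro n
    have h0 : Integrable (fun t : ℝ => t ^ n) (Measure.map Y ℙ) := by
      rw [hYg]; exact integrable_pow_gam n
    exact (integrable_map_measure (continuous_pow n).aestronglyMeasurable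
      hYm.aemeasurable).mp h0
  have hmixP : ∀ m n : ℕ, Integrable (fun ω => X ω^m * Y ω^n) ℙ := by
    intro m n
    apply Integrable.mono (((hXn (2*m)).add (hYn (2*n))).div_const 2)
      (((hXm.pow_const m).mul (hYm.pow_const n)).aestronglyMeasurable)
    apply Eventually.of_forall fun ω => ?_
    have hA : ‖X ω^m * Y ω^n‖ = |X ω|^m * |Y ω|^n := by
      rw [norm_mul, norm_pow, norm_pow, Real.norm_eq_abs, Real.norm_eq_abs]
    have h1 : (|X ω|^m)^2 = X ω^(2*m) := by
      rw [← pow_mul, mul_comm m 2, pow_mul, sq_abs, ← pow_mul]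
    have h2 : (|Y ω|^n)^2 = Y ω^(2*n) := by
      rw [← pow_mul, mul_comm n 2, pow_mul, sq_abs, ← pow_mul]
    have h3 : |X ω|^m * |Y ω|^n ≤ (X ω^(2*m) + Y ω^(2*n))/2 := by
      nlinarith [sq_nonneg (|X ω|^m - |Y ω|^n), h1, h2]
    show ‖X ω^m * Y ω^n‖ ≤ ‖(X ω^(2*m) + Y ω^(2*n))/2‖
    rw [hA]
    exact h3.trans (le_abs_self _)
  have hmixC : ∀ m n : ℕ,
      Integrable (fun p : ℝ×ℝ => p.1^m * (ρ*p.1 + s*p.2)^n) (gam.prod gam) := by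
    intro m n
    exact (integrable_prod_comp (Polynomial.X^m : Polynomial ℝ) (Polynomial.X^n) ρ s).congr
      (Eventually.of_forall fun p => by simp)
  have trgmom : ∀ (N : ℕ) (a b : ℝ), ∫ ω, (a * X ω + b * Y ω)^N ∂ℙ
      = ∫ t, t^N ∂(gaussianReal 0 (Real.toNNReal (a^2 + 2*a*b*ρ + b^2))) := by
    intro N a b
    rw [← hGauss' a b]
    exact (integral_map (((hXm.const_mul a).add (hYm.const_mul b)).aemeasurable)
      (continuous_pow N).aestronglyMeasurable).symm
  have conmom : ∀ (N : ℕ) (a b : ℝ),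
      ∫ p : ℝ×ℝ, (a * p.1 + b * (ρ*p.1 + s*p.2))^N ∂(gam.prod gam)
      = ∫ t, t^N ∂(gaussianReal 0 (Real.toNNReal (a^2 + 2*a*b*ρ + b^2))) := by
    intro N a b
    have h1 : (fun p : ℝ×ℝ => (a*p.1 + b*(ρ*p.1+s*p.2))^N)
        = fun p => ((a+b*ρ)*p.1 + (b*s)*p.2)^N := by
      funext p
      congr 1
      ring
    rw [h1, mom (a+b*ρ) (b*s) N]
    congr 3
    linear_combination (b^2) * hs
  have hM : ∀ i j : ℕ, ∫ ω, X ω^i * Y ω^j ∂ℙ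
      = ∫ p : ℝ×ℝ, p.1^i * (ρ*p.1+s*p.2)^j ∂(gam.prod gam) := by
    intro i j
    have hext := extract (i+j)
      (fun i' => ∫ ω, X ω^i' * Y ω^(i+j-i') ∂ℙ)
      (fun i' => ∫ p : ℝ×ℝ, p.1^i' * (ρ*p.1+s*p.2)^(i+j-i') ∂(gam.prod gam))
      ?_ i (by omega)
    · have h5 : ∫ ω, X ω^i * Y ω^(i+j-i) ∂ℙ
          = ∫ p : ℝ×ℝ, p.1^i * (ρ*p.1+s*p.2)^(i+j-i) ∂(gam.prod gam) := hext
      simpa only [Nat.add_sub_cancel_left] using h5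
    · intro a b
      rw [← expand_moment ℙ X Y hmixP (i+j) a b,
        ← expand_moment (gam.prod gam) (fun p => p.1) (fun p => ρ*p.1+s*p.2) hmixC (i+j) a b,
        trgmom (i+j) a b, conmom (i+j) a b]
  have hfinal : ∫ ω, (Hr k).eval (X ω) * (Hr l).eval (Y ω) ∂ℙ
      = if k = l then ρ^k * (k ! : ℝ) else 0 := by
    rw [expand_hermite ℙ X Y hmixP k l]
    calc ∑ i ∈ Finset.range (k+1), ∑ j ∈ Finset.range (l+1),
          (Hr k).coeff i * (Hr l).coeff j * ∫ ω, X ω^i * Y ω^j ∂ℙ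
        = ∑ i ∈ Finset.range (k+1), ∑ j ∈ Finset.range (l+1),
          (Hr k).coeff i * (Hr l).coeff j
            * ∫ p : ℝ×ℝ, p.1^i * (ρ*p.1+s*p.2)^j ∂(gam.prod gam) := by
          apply Finset.sum_congr rfl
          intro i _
          apply Finset.sum_congr rfl
          intro j _
          rw [hM i j]
      _ = ∫ p : ℝ×ℝ, (Hr k).eval p.1 * (Hr l).eval (ρ*p.1 + s*p.2) ∂(gam.prod gam) :=
          (expand_hermite (gam.prod gam) (fun p => p.1) (fun p => ρ*p.1+s*p.2) hmixC k l).symm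
      _ = if k = l then ρ^k * (k ! : ℝ) else 0 := concrete ρ s hs k l
  have hXeq : ∀ ω, U ω / u = X ω := fun _ => rfl
  have hYeq : ∀ ω, V ω / v = Y ω := fun _ => rfl
  have hint2 : (fun ω => normHermite k (U ω / √(u^2)) * normHermite l (V ω / √(v^2)))
      = fun ω => (√(Nat.factorial k : ℝ) * √(Nat.factorial l : ℝ))⁻¹ * ((Hr k).eval (X ω) * (Hr l).eval (Y ω)) := by
    funext ω
    rw [hu', hv', normHermite, normHermite, aeval_eq_Hr, aeval_eq_Hr, hXeq, hYeq]
    ring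
  rw [hint2, integral_const_mul, hfinal]
  by_cases hkl : k = l
  · subst hkl
    rw [if_pos rfl, if_pos rfl, Real.mul_self_sqrt (Nat.cast_nonneg _)]
    have hfac : ((k ! : ℕ) : ℝ) ≠ 0 := Nat.cast_ne_zero.mpr k.factorial_ne_zero
    field_simp
    try ring
  · rw [if_neg hkl, if_neg hkl, mul_zero]
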